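/- The incidence algebra A(P) of a finite poset (P,≤) over a field is hereditary if and only if P is diamond-free, i.e., there are no four elements a,b,c,d with a ≤ b ≤ d, a ≤ c ≤ d, and b,c incomparable. -/

import Mathlib

open Finset

namespace IncidenceHereditaryAux

open scoped Classical

set_option linter.unusedSectionVars false

variable (K : Type) [Field K] {P : Type} [PartialOrder P] [Fintype P]
  [LocallyFiniteOrder P] [DecidableEq P]

/-- The "matrix unit" `δ_{(x,y)}` of the incidence algebra (zero unless `x ≤ y`). -/
noncomputable def sg (x y : P) : IncidenceAlgebra K P :=
  ⟨fun a b => if a = x ∧ b = y ∧ x ≤ y then 1 else 0, by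
    intro a b h
    simp only [ite_eq_right_iff, one_ne_zero]
    rintro ⟨rfl, rfl, hxy⟩
    exact absurd hxy h⟩

lemma sg_apply (x y a b : P) :
    sg K x y a b = if a = x ∧ b = y ∧ x ≤ y then 1 else 0 := rfl

variable {K}

lemma sg_eq_zero_of_not_le {x y : P} (h : ¬ x ≤ y) : sg K x y = 0 := by
  ext a b _
  rw [sg_apply, IncidenceAlgebra.zero_apply, if_neg (by tauto)]

lemma sum_apply {ι : Type*} (s : Finset ι) (f : ι → IncidenceAlgebra K P) (a b : P) :
    (∑ i ∈ s, f i) a b = ∑ i ∈ s, f i a b :=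
  map_sum (⟨⟨fun g => g a b, rfl⟩, fun _ _ => rfl⟩ :
    IncidenceAlgebra K P →+ K) f s

lemma sum_sg_self : ∑ y : P, sg K y y = 1 := by
  ext a b _
  rw [sum_apply, IncidenceAlgebra.one_apply]
  rcases eq_or_ne a b with rfl | hab
  · rw [Finset.sum_eq_single a]
    · rw [sg_apply, if_pos ⟨rfl, rfl, le_refl a⟩, if_pos rfl]
    · intro y _ hy
      rw [sg_apply, if_neg]
      rintro ⟨rfl, -⟩; exact hy rfl
    · intro h; exact absurd (mem_univ a) h
  · rw [if_neg hab, Finset.sum_eq_zero]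
    intro y _
    rw [sg_apply, if_neg]
    rintro ⟨rfl, rfl, -⟩; exact hab rfl

/-- `(sg x y * f) a b = if a = x ∧ x ≤ y ∧ y ≤ b then f y b else 0`. -/
lemma sg_mul_apply (x y : P) (f : IncidenceAlgebra K P) (a b : P) :
    (sg K x y * f) a b = if a = x ∧ x ≤ y ∧ y ≤ b then f y b else 0 := by
  rw [IncidenceAlgebra.mul_apply]
  by_cases h : a = x ∧ x ≤ y ∧ y ≤ b
  · obtain ⟨ha, hxy, hyb⟩ := h
    rw [if_pos ⟨ha, hxy, hyb⟩, Finset.sum_eq_single y]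
    · rw [sg_apply, if_pos ⟨ha, rfl, hxy⟩, one_mul]
    · intro z _ hz
      rw [sg_apply, if_neg (by rintro ⟨-, rfl, -⟩; exact hz rfl), zero_mul]
    · intro hy
      exact absurd (mem_Icc.2 ⟨ha ▸ hxy, hyb⟩) hy
  · rw [if_neg h, Finset.sum_eq_zero]
    intro z hz
    rw [mem_Icc] at hz
    rw [sg_apply, ite_mul, zero_mul, if_neg]
    rintro ⟨ha, rfl, hxy⟩
    exact h ⟨ha, hxy, hz.2⟩

lemma mul_sg_apply (f : IncidenceAlgebra K P) (x y : P) (a b : P) :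
    (f * sg K x y) a b = if b = y ∧ x ≤ y ∧ a ≤ x then f a x else 0 := by
  rw [IncidenceAlgebra.mul_apply]
  by_cases h : b = y ∧ x ≤ y ∧ a ≤ x
  · obtain ⟨hb, hxy, hax⟩ := h
    rw [if_pos ⟨hb, hxy, hax⟩, Finset.sum_eq_single x]
    · rw [sg_apply, if_pos ⟨rfl, hb, hxy⟩, mul_one]
    · intro z _ hz
      rw [sg_apply, if_neg (by rintro ⟨rfl, -, -⟩; exact hz rfl), mul_zero]
    · intro hx
      exact absurd (mem_Icc.2 ⟨hax, hb ▸ hxy⟩) hx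
  · rw [if_neg h, Finset.sum_eq_zero]
    intro z hz
    rw [mem_Icc] at hz
    rw [sg_apply, mul_ite, mul_zero, if_neg]
    rintro ⟨rfl, hb, hxy⟩
    exact h ⟨hb, hxy, hz.1⟩

lemma sg_mul_sg {x y z : P} (hxy : x ≤ y) (hyz : y ≤ z) :
    sg K x y * sg K y z = sg K x z := by
  ext a b _
  rw [sg_mul_apply]
  by_cases h : a = x ∧ x ≤ y ∧ y ≤ b
  · obtain ⟨ha, -, hyb⟩ := h
    rw [if_pos ⟨ha, hxy, hyb⟩, sg_apply, sg_apply]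
    by_cases hbz : b = z
    · rw [if_pos ⟨rfl, hbz, hyz⟩, if_pos ⟨ha, hbz, hxy.trans hyz⟩]
    · rw [if_neg (by tauto), if_neg (by tauto)]
  · rw [if_neg h, sg_apply, if_neg]
    rintro ⟨ha, rfl, -⟩
    exact h ⟨ha, hxy, hyz⟩

lemma sg_mul_sg_of_ne {x y y' z : P} (h : y ≠ y') :
    sg K x y * sg K y' z = 0 := by
  ext a b _
  rw [sg_mul_apply, IncidenceAlgebra.zero_apply]
  by_cases h2 : a = x ∧ x ≤ y ∧ y ≤ b
  · rw [if_pos h2, sg_apply, if_neg (by rintro ⟨rfl, -, -⟩; exact h rfl)]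
  · rw [if_neg h2]

/-- `e_x * f * e_y = f x y • sg x y`. -/
lemma sg_mul_mul_sg (x y : P) (f : IncidenceAlgebra K P) :
    sg K x x * f * sg K y y = f x y • sg K x y := by
  ext a b _
  rw [mul_sg_apply, IncidenceAlgebra.constSMul_apply, sg_apply, smul_eq_mul]
  by_cases h1 : b = y ∧ y ≤ y ∧ a ≤ y
  · obtain ⟨hb, -, hay⟩ := h1
    rw [if_pos ⟨hb, le_refl y, hay⟩, sg_mul_apply]
    by_cases h2 : a = x ∧ x ≤ x ∧ x ≤ y
    · obtain ⟨ha, -, hxy⟩ := h2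
      rw [if_pos ⟨ha, le_refl x, hxy⟩, if_pos ⟨ha, hb, hxy⟩, mul_one]
    · rw [if_neg h2, if_neg, mul_zero]
      rintro ⟨ha, -, hxy⟩
      exact h2 ⟨ha, le_refl x, hxy⟩
  · rw [if_neg h1, if_neg, mul_zero]
    rintro ⟨ha, hb, hxy⟩
    exact h1 ⟨hb, le_refl y, ha ▸ hxy⟩


/-- If `P` contains a diamond, then a specific left ideal of the incidence algebra is not
projective. -/
lemma diamond_not_projective {a b c d : P} (hab : a ≤ b) (hbd : b ≤ d) (hac : a ≤ c)
    (hcd : c ≤ d) (hbc : ¬ b ≤ c) (hcb : ¬ c ≤ b)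
    (hproj : Module.Projective (IncidenceAlgebra K P)
      (Submodule.span (IncidenceAlgebra K P) {sg K b d, sg K c d})) : False := by
  classical
  set v1 : IncidenceAlgebra K P := sg K b d with hv1
  set v2 : IncidenceAlgebra K P := sg K c d with hv2
  set N : Submodule (IncidenceAlgebra K P) (IncidenceAlgebra K P) :=
    Submodule.span (IncidenceAlgebra K P) {v1, v2} with hN
  have hv1N : v1 ∈ N := Submodule.subset_span (by simp)
  have hv2N : v2 ∈ N := Submodule.subset_span (by simp)
  let g : IncidenceAlgebra K P × IncidenceAlgebra K P →ₗ[IncidenceAlgebra K P]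
      IncidenceAlgebra K P :=
    (LinearMap.toSpanSingleton _ _ v1).comp (LinearMap.fst _ _ _) +
      (LinearMap.toSpanSingleton _ _ v2).comp (LinearMap.snd _ _ _)
  have hg : ∀ pq : IncidenceAlgebra K P × IncidenceAlgebra K P,
      g pq = pq.1 * v1 + pq.2 * v2 := by
    intro pq
    simp [g, LinearMap.toSpanSingleton_apply, smul_eq_mul]
  have hgmem : ∀ pq, g pq ∈ N := by
    intro pq
    rw [hg]
    exact Submodule.add_mem _
      (by simpa [smul_eq_mul] using N.smul_mem pq.1 hv1N)
      (by simpa [smul_eq_mul] using N.smul_mem pq.2 hv2N)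
  let f := g.codRestrict N hgmem
  have hsurj : Function.Surjective f := by
    rintro ⟨n, hn⟩
    rw [Submodule.mem_span_pair] at hn
    obtain ⟨p, q, hpq⟩ := hn
    refine ⟨(p, q), Subtype.ext ?_⟩
    simpa [f, LinearMap.codRestrict_apply, hg, smul_eq_mul] using hpq
  haveI := hproj
  obtain ⟨σ, hσ⟩ := Module.projective_lifting_property f LinearMap.id hsurj
  set n1 : N := ⟨v1, hv1N⟩ with hn1
  set n2 : N := ⟨v2, hv2N⟩ with hn2
  have h1 : (σ n1).1 * v1 + (σ n1).2 * v2 = v1 := by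
    have h1a := LinearMap.congr_fun hσ n1
    have h1b := congrArg Subtype.val h1a
    simpa [f, LinearMap.codRestrict_apply, hg] using h1b
  have hsmul : sg K a b • n1 = sg K a c • n2 := by
    apply Subtype.ext
    show sg K a b • v1 = sg K a c • v2
    rw [hv1, hv2, smul_eq_mul, smul_eq_mul, sg_mul_sg hab hbd, sg_mul_sg hac hcd]
  have hE : sg K a b * (σ n1).1 = sg K a c * (σ n2).1 := by
    have hE1 := congrArg (fun z => z.1) (congrArg σ hsmul)
    simpa [map_smul, Prod.smul_fst, smul_eq_mul] using hE1
  have h3 : (σ n1).1 b b = 1 := by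
    have h3a : ((σ n1).1 * v1 + (σ n1).2 * v2) b d = v1 b d :=
      congrArg (fun z : IncidenceAlgebra K P => z b d) h1
    rw [hv1, hv2, IncidenceAlgebra.add_apply, mul_sg_apply, mul_sg_apply, sg_apply,
      if_pos ⟨rfl, hbd, le_refl b⟩, if_neg (by tauto), if_pos ⟨rfl, rfl, hbd⟩,
      add_zero] at h3a
    exact h3a
  have h4 : (sg K a b * (σ n1).1) a b = (sg K a c * (σ n2).1) a b :=
    congrArg (fun z : IncidenceAlgebra K P => z a b) hE
  rw [sg_mul_apply, sg_mul_apply, if_pos ⟨rfl, hab, le_refl b⟩, if_neg (by tauto), h3] at h4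
  exact one_ne_zero h4


section Main

variable {ι : Type}

lemma fsum_apply {γ : Type*} (s : Finset γ) (f : γ → (ι →₀ IncidenceAlgebra K P)) (i : ι) :
    (∑ y ∈ s, f y) i = ∑ y ∈ s, f y i :=
  map_sum (Finsupp.applyAddHom i) f s

/-- Left multiplication by a fixed element, as a `K`-linear map on the free module. -/
noncomputable def lmul (g : IncidenceAlgebra K P) :
    (ι →₀ IncidenceAlgebra K P) →ₗ[K] (ι →₀ IncidenceAlgebra K P) where
  toFun w := g • w
  map_add' := smul_add g
  map_smul' k w := by
    ext i
    simp only [Finsupp.smul_apply, RingHom.id_apply, smul_eq_mul]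
    rw [Algebra.mul_smul_comm]

@[simp] lemma lmul_apply (g : IncidenceAlgebra K P) (w : ι →₀ IncidenceAlgebra K P) :
    lmul g w = g • w := rfl

set_option maxHeartbeats 1600000 in
theorem projective_of_diamondFree
    (hDF : ¬ ∃ a b c d : P, a ≤ b ∧ b ≤ d ∧ a ≤ c ∧ c ≤ d ∧ ¬ b ≤ c ∧ ¬ c ≤ b)
    (ι : Type) (N : Submodule (IncidenceAlgebra K P) (ι →₀ IncidenceAlgebra K P)) :
    Module.Projective (IncidenceAlgebra K P) N := by
  classical
  have hcomp : ∀ {x p y z : P}, x ≤ y → y ≤ p → x ≤ z → z ≤ p → y ≤ z ∨ z ≤ y := by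
    intro x p y z h1 h2 h3 h4
    by_contra hcon
    push_neg at hcon
    exact hDF ⟨x, y, z, p, h1, h2, h3, h4, hcon.1, hcon.2⟩
  -- row subspaces
  set R : P → Submodule K (ι →₀ IncidenceAlgebra K P) :=
    fun y => (N.restrictScalars K).map (lmul (sg K y y)) with hRdef
  set S : P → Submodule K (ι →₀ IncidenceAlgebra K P) :=
    fun y => Submodule.span K
      {w | ∃ z, y < z ∧ ∃ n ∈ N, w = sg K y z • n} with hSdef
  have hRN : ∀ y, R y ≤ N.restrictScalars K := by
    rintro y w ⟨n, hn, rfl⟩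
    exact N.smul_mem _ hn
  have hRE : ∀ y w, w ∈ R y → sg K y y • w = w := by
    rintro y w ⟨n, hn, rfl⟩
    simp only [lmul_apply]
    rw [smul_smul, sg_mul_sg (le_refl y) (le_refl y)]
  have hRmem : ∀ y (n : ι →₀ IncidenceAlgebra K P), n ∈ N → sg K y y • n ∈ R y := by
    intro y n hn
    exact ⟨n, hn, rfl⟩
  have hSR : ∀ y, S y ≤ R y := by
    intro y
    rw [hSdef, Submodule.span_le]
    rintro w ⟨z, hyz, n, hn, rfl⟩
    refine ⟨sg K y z • n, N.smul_mem _ hn, ?_⟩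
    simp only [lmul_apply]
    rw [smul_smul, sg_mul_sg (le_refl y) hyz.le]
  -- choose complements
  have hexC : ∀ y : P, ∃ C : Submodule K (ι →₀ IncidenceAlgebra K P),
      C ⊓ S y = ⊥ ∧ C ⊔ S y = R y := by
    intro y
    obtain ⟨C', hC'⟩ := Submodule.exists_isCompl (K := K) (V := ↥(R y)) (((S y).comap (R y).subtype : Submodule K ↥(R y)))
    have hmapS : Submodule.map (R y).subtype ((S y).comap (R y).subtype) = S y := by
      rw [Submodule.map_comap_subtype, inf_eq_right.2 (hSR y)]
    refine ⟨C'.map (R y).subtype, ?_, ?_⟩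
    · apply (Submodule.eq_bot_iff _).2
      rintro w ⟨hwC, hwS⟩
      obtain ⟨w', hw', rfl⟩ := hwC
      have hmem : w' ∈ (S y).comap (R y).subtype ⊓ C' := ⟨hwS, hw'⟩
      rw [hC'.inf_eq_bot, Submodule.mem_bot] at hmem
      rw [hmem]
      rfl
    · have h1 : (C' ⊔ (S y).comap (R y).subtype).map (R y).subtype =
          C'.map (R y).subtype ⊔ S y := by
        rw [Submodule.map_sup, hmapS]
      calc C'.map (R y).subtype ⊔ S y
          = (C' ⊔ (S y).comap (R y).subtype).map (R y).subtype := h1.symm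
        _ = (⊤ : Submodule K (R y)).map (R y).subtype := by rw [hC'.symm.sup_eq_top]
        _ = R y := by rw [Submodule.map_top, Submodule.range_subtype]
  choose C hCS hCsup using hexC
  have hCR : ∀ y, C y ≤ R y := fun y => (hCsup y) ▸ le_sup_left
  have hCN : ∀ y, C y ≤ N.restrictScalars K := fun y => (hCR y).trans (hRN y)
  -- basis of each complement
  set B := fun y : P => Module.Basis.ofVectorSpace K (C y) with hB
  set T := (Σ y : P, Module.Basis.ofVectorSpaceIndex K (C y)) with hT
  set v : T → (ι →₀ IncidenceAlgebra K P) := fun t => (B t.1 t.2 : ι →₀ IncidenceAlgebra K P)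
    with hv
  have hvC : ∀ t : T, v t ∈ C t.1 := fun t => (B t.1 t.2).2
  have hvN : ∀ t : T, v t ∈ N := fun t => hCN t.1 (hvC t)
  have hEv : ∀ t : T, sg K t.1 t.1 • v t = v t := fun t => hRE t.1 _ (hCR t.1 (hvC t))
  set π : (T →₀ IncidenceAlgebra K P) →ₗ[IncidenceAlgebra K P] (ι →₀ IncidenceAlgebra K P) :=
    Finsupp.linearCombination _ v with hπdef
  -- π has range N
  have hrange : LinearMap.range π = N := by
    rw [hπdef, Finsupp.range_linearCombination]
    apply le_antisymm
    · rw [Submodule.span_le]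
      rintro _ ⟨t, rfl⟩
      exact hvN t
    · intro n hn
      have hRspan : ∀ y : P, R y ≤
          (Submodule.span (IncidenceAlgebra K P) (Set.range v)).restrictScalars K := by
        intro y
        induction y using WellFoundedGT.induction with
        | _ y IH =>
        rw [← hCsup y]
        apply sup_le
        · -- C y is spanned by basis vectors
          intro w hw
          have hco : w = ∑ j ∈ ((B y).repr ⟨w, hw⟩).support,
              ((B y).repr ⟨w, hw⟩) j • (v ⟨y, j⟩) := by
            have h1 : (⟨w, hw⟩ : C y) =
                Finsupp.sum ((B y).repr ⟨w, hw⟩) (fun j k => k • (B y j)) := by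
              conv_lhs => rw [← (B y).linearCombination_repr (⟨w, hw⟩ : C y)]
              rw [Finsupp.linearCombination_apply]
            have h2 := congrArg (Submodule.subtype (C y)) h1
            simp only [Submodule.coe_subtype, Finsupp.sum, map_sum, map_smul] at h2
            simpa only [hv] using h2
          rw [Submodule.restrictScalars_mem, hco]
          apply sum_mem
          intro j _
          exact Submodule.smul_mem
            ((Submodule.span (IncidenceAlgebra K P) (Set.range v)).restrictScalars K) _
            (Submodule.subset_span (Set.mem_range_self (⟨y, j⟩ : T)))
        · rw [hSdef]
          apply Submodule.span_le.2
          rintro w ⟨z, hyz, n, hn, rfl⟩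
          have h1 : sg K z z • n ∈
              Submodule.span (IncidenceAlgebra K P) (Set.range v) :=
            IH z hyz (hRmem z n hn)
          have h2 : sg K y z • n = sg K y z • (sg K z z • n) := by
            rw [smul_smul, sg_mul_sg hyz.le (le_refl z)]
          show sg K y z • n ∈
            (Submodule.span (IncidenceAlgebra K P) (Set.range v)).restrictScalars K
          rw [Submodule.restrictScalars_mem, h2]
          exact Submodule.smul_mem _ _ h1
      have hn1 : n = ∑ y : P, sg K y y • n := by
        calc n = (1 : IncidenceAlgebra K P) • n := (one_smul _ _).symm
          _ = (∑ y : P, sg K y y) • n := by rw [sum_sg_self]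
          _ = ∑ y : P, sg K y y • n := Finset.sum_smul
      rw [hn1]
      apply sum_mem
      intro y _
      exact (hRspan y) (hRmem y n hn)
  -- the idempotent-corrected copy of the free module
  set Q : Submodule (IncidenceAlgebra K P) (T →₀ IncidenceAlgebra K P) :=
    { carrier := {φ | ∀ t : T, φ t * sg K t.1 t.1 = φ t}
      add_mem' := by
        intro φ ψ hφ hψ t
        rw [Finsupp.add_apply, add_mul, hφ t, hψ t]
      zero_mem' := by
        intro t
        rw [Finsupp.coe_zero, Pi.zero_apply, zero_mul]
      smul_mem' := by
        intro a φ hφ t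
        rw [Finsupp.smul_apply, smul_eq_mul, mul_assoc, hφ t] } with hQdef
  have hQmem : ∀ φ : T →₀ IncidenceAlgebra K P,
      φ ∈ Q ↔ ∀ t : T, φ t * sg K t.1 t.1 = φ t := fun φ => Iff.rfl
  set ρ : (T →₀ IncidenceAlgebra K P) →ₗ[IncidenceAlgebra K P] (T →₀ IncidenceAlgebra K P) :=
    Finsupp.lsum ℕ (fun t => (Finsupp.lsingle t).comp
      (LinearMap.toSpanSingleton (IncidenceAlgebra K P) (IncidenceAlgebra K P)
        (sg K t.1 t.1))) with hρdef
  have hρ : ∀ (φ : T →₀ IncidenceAlgebra K P) (t : T),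
      (ρ φ) t = φ t * sg K t.1 t.1 := by
    intro φ t
    rw [hρdef, Finsupp.lsum_apply, Finsupp.sum_apply, Finsupp.sum]
    simp only [LinearMap.coe_comp, Function.comp_apply, Finsupp.lsingle_apply,
      LinearMap.toSpanSingleton_apply, smul_eq_mul, Finsupp.single_apply]
    by_cases hmem : t ∈ φ.support
    · rw [Finset.sum_eq_single t]
      · rw [if_pos rfl]
      · intro t' _ hne
        rw [if_neg hne]
      · intro h
        exact absurd hmem h
    · rw [Finsupp.notMem_support_iff.1 hmem, zero_mul]
      apply Finset.sum_eq_zero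
      intro t' ht'
      rw [if_neg]
      rintro rfl
      exact hmem ht' 
  have hρQ : ∀ φ, ρ φ ∈ Q := by
    intro φ
    rw [hQmem]
    intro t
    rw [hρ, mul_assoc, sg_mul_sg (le_refl t.1) (le_refl t.1)]
  have hρid : ∀ φ ∈ Q, ρ φ = φ := by
    intro φ hφ
    apply Finsupp.ext
    intro t
    rw [hρ, (hQmem φ).1 hφ t]
  have hsupρ : ∀ φ : T →₀ IncidenceAlgebra K P, (ρ φ).support ⊆ φ.support := by
    intro φ t ht
    rw [Finsupp.mem_support_iff] at ht ⊢
    intro h0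
    rw [hρ, h0, zero_mul] at ht
    exact ht rfl
  have hπρ : ∀ φ, π (ρ φ) = π φ := by
    intro φ
    rw [hπdef, Finsupp.linearCombination_apply, Finsupp.linearCombination_apply]
    rw [Finsupp.sum_of_support_subset (ρ φ) (hsupρ φ) (fun t a => a • v t)
      (fun t _ => zero_smul _ _)]
    rw [Finsupp.sum]
    apply Finset.sum_congr rfl
    intro t _
    rw [hρ, mul_smul, hEv t]
  -- entry computations
  have hentry : ∀ (x y : P) (u : ι →₀ IncidenceAlgebra K P) (i : ι) (p : P),
      ((sg K x y • u) i) x p = if x ≤ y ∧ y ≤ p then ((u i) y p) else 0 := by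
    intro x y u i p
    rw [Finsupp.smul_apply, smul_eq_mul, sg_mul_apply]
    by_cases h : x ≤ y ∧ y ≤ p
    · rw [if_pos ⟨rfl, h.1, h.2⟩, if_pos h]
    · rw [if_neg (by tauto), if_neg h]
  have hentry0 : ∀ (x y : P) (u : ι →₀ IncidenceAlgebra K P) (i : ι) (a p : P), a ≠ x →
      ((sg K x y • u) i) a p = 0 := by
    intro x y u i a p ha
    rw [Finsupp.smul_apply, smul_eq_mul, sg_mul_apply, if_neg (by tauto)]
  -- the key independence lemma
  have key : ∀ (x : P) (u : P → (ι →₀ IncidenceAlgebra K P)),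
      (∀ y, u y ∈ C y) → (∀ y, ¬ x ≤ y → u y = 0) →
      (∑ y : P, sg K x y • u y) = 0 → ∀ y, u y = 0 := by
    intro x u huC hux hsum
    by_contra hcon
    push_neg at hcon
    obtain ⟨y0, hy0⟩ := hcon
    obtain ⟨m, hms, hmin⟩ := (wellFounded_lt (α := P)).has_min {y | u y ≠ 0} ⟨y0, hy0⟩
    have hum : u m ≠ 0 := hms
    have hxm : x ≤ m := by
      by_contra h
      exact hum (hux m h)
    have huN : ∀ y, u y ∈ N := fun y => hCN y (huC y)
    have hent : ∀ (i : ι) (p : P),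
        (∑ y : P, if x ≤ y ∧ y ≤ p then ((u y) i) y p else 0) = 0 := by
      intro i p
      have h1 : (∑ y : P, sg K x y • u y) i = 0 := by rw [hsum]; rfl
      rw [fsum_apply] at h1
      have h2 : (∑ y : P, (sg K x y • u y) i) x p = 0 := by rw [h1]; rfl
      rw [sum_apply] at h2
      exact (Finset.sum_congr rfl (fun y _ => (hentry x y (u y) i p).symm)).trans h2
    have hentm : ∀ (i : ι) (p : P),
        (∑ y : P, if m ≤ y ∧ y ≤ p then ((u y) i) y p else 0) = 0 := by
      intro i p
      by_cases hmp : m ≤ p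
      · refine Eq.trans (Finset.sum_congr rfl ?_) (hent i p)
        intro y _
        by_cases hyu : u y = 0
        · rw [hyu]
          simp only [Finsupp.coe_zero, Pi.zero_apply, IncidenceAlgebra.zero_apply, ite_self]
        · by_cases hyp : y ≤ p
          · by_cases hmy : m ≤ y
            · rw [if_pos ⟨hmy, hyp⟩, if_pos ⟨hxm.trans hmy, hyp⟩]
              
            · by_cases hxy : x ≤ y
              · have hym : y ≤ m := by
                  rcases hcomp hxy hyp hxm hmp with hc | hc
                  · exact hc
                  · exact absurd hc hmy
                have hlt : y < m := lt_of_le_of_ne hym (fun h => hmy (h ▸ le_refl y))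
                exact absurd hlt (hmin y hyu)
              · rw [if_neg (by tauto), if_neg (by tauto)]
          · rw [if_neg (by tauto), if_neg (by tauto)]
      · apply Finset.sum_eq_zero
        intro y _
        rw [if_neg]
        rintro ⟨h1, h2⟩
        exact hmp (h1.trans h2)
    have hDsum : (∑ z : P, sg K m z • u z) = 0 := by
      apply Finsupp.ext
      intro i
      rw [fsum_apply]
      show _ = (0 : IncidenceAlgebra K P)
      ext a p hap
      rw [sum_apply, IncidenceAlgebra.zero_apply]
      by_cases ham : a = m
      · subst ham
        rw [Finset.sum_congr rfl (fun z _ => hentry a z (u z) i p)]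
        exact hentm i p
      · apply Finset.sum_eq_zero
        intro z _
        exact hentry0 m z (u z) i a p ham
    have humem : u m ∈ S m := by
      have h1 : sg K m m • u m + ∑ z ∈ Finset.univ.erase m, sg K m z • u z = 0 := by
        rw [Finset.add_sum_erase Finset.univ (fun z => sg K m z • u z) (Finset.mem_univ m)]
        exact hDsum
      have h2 : sg K m m • u m = u m := hRE m _ (hCR m (huC m))
      have h3 : u m = -∑ z ∈ Finset.univ.erase m, sg K m z • u z := by
        rw [← h2]
        exact eq_neg_of_add_eq_zero_left h1
      rw [h3]
      apply Submodule.neg_mem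
      apply Submodule.sum_mem
      intro z hz
      have hzm : z ≠ m := (Finset.mem_erase.1 hz).1
      by_cases hmz : m ≤ z
      · have hlt : m < z := lt_of_le_of_ne hmz (Ne.symm hzm)
        show sg K m z • u z ∈ S m
        rw [hSdef]
        exact Submodule.subset_span ⟨z, hlt, u z, huN z, rfl⟩
      · rw [sg_eq_zero_of_not_le hmz, zero_smul]
        exact Submodule.zero_mem _
    have hfin : u m ∈ C m ⊓ S m := ⟨huC m, humem⟩
    rw [hCS m, Submodule.mem_bot] at hfin
    exact hum hfin
  -- π is injective on Q
  have hcore : ∀ φ, φ ∈ Q → π φ = 0 → φ = 0 := by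
    intro φ hφmem hπ0
    have hφ : ∀ t : T, φ t * sg K t.1 t.1 = φ t := (hQmem φ).1 hφmem
    have hmain : ∀ x : P, ∑ t ∈ φ.support, (φ t x t.1) • (sg K x t.1 • v t) = 0 := by
      intro x
      have h0 : sg K x x • (π φ) = 0 := by rw [hπ0, smul_zero]
      rw [hπdef, Finsupp.linearCombination_apply, Finsupp.sum, Finset.smul_sum] at h0
      rw [← h0]
      apply Finset.sum_congr rfl
      intro t _
      calc (φ t x t.1) • (sg K x t.1 • v t)
          = ((φ t x t.1) • sg K x t.1) • v t := (smul_assoc _ _ _).symm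
        _ = (sg K x x * φ t * sg K t.1 t.1) • v t := by rw [sg_mul_mul_sg]
        _ = (sg K x x * (φ t * sg K t.1 t.1)) • v t := by rw [mul_assoc]
        _ = (sg K x x * φ t) • v t := by rw [hφ t]
        _ = sg K x x • (φ t • v t) := mul_smul _ _ _
    have hcoef : ∀ (x : P) (t : T), φ t x t.1 = 0 := by
      intro x t0
      set u : P → (ι →₀ IncidenceAlgebra K P) := fun y =>
        ∑ j ∈ (φ.split y).support, (φ ⟨y, j⟩ x y) • (v ⟨y, j⟩) with hu
      have huC : ∀ y, u y ∈ C y := by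
        intro y
        apply sum_mem
        intro j _
        exact Submodule.smul_mem _ _ (hvC ⟨y, j⟩)
      have hux : ∀ y, ¬ x ≤ y → u y = 0 := by
        intro y h
        apply Finset.sum_eq_zero
        intro j _
        rw [IncidenceAlgebra.apply_eq_zero_of_not_le h, zero_smul]
      have husum : (∑ y : P, sg K x y • u y) = 0 := by
        rw [← hmain x]
        have hterm : ∀ y : P, sg K x y • u y =
            ∑ j ∈ (φ.split y).support, (φ ⟨y, j⟩ x y) • (sg K x y • v ⟨y, j⟩) := by
          intro y
          rw [hu, Finset.smul_sum]
          apply Finset.sum_congr rfl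
          intro j _
          rw [smul_comm]
        have lhs_eq : (∑ y : P, sg K x y • u y)
            = ∑ y ∈ Finset.univ, ∑ j ∈ (φ.split y).support,
                (φ ⟨y, j⟩ x y) • (sg K x y • v ⟨y, j⟩) :=
          Finset.sum_congr rfl (fun y _ => hterm y)
        have rhs_eq : ∑ t ∈ φ.support, (φ t x t.1) • (sg K x t.1 • v t)
            = ∑ y ∈ Finsupp.splitSupport φ, ∑ j ∈ (φ.split y).support,
                (φ ⟨y, j⟩ x y) • (sg K x y • v ⟨y, j⟩) := by
          rw [Finsupp.sigma_support φ, Finset.sum_sigma]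
        rw [lhs_eq, rhs_eq]
        apply (Finset.sum_subset (Finset.subset_univ _) ?_).symm
        intro y _ hy
        have hempty : φ.split y = 0 := by
          by_contra hne
          exact hy ((Finsupp.mem_splitSupport_iff_nonzero φ y).2 hne)
        rw [hempty, Finsupp.support_zero, Finset.sum_empty]
      have hz := key x u huC hux husum
      obtain ⟨y, j⟩ := t0
      by_cases hmem : j ∈ (φ.split y).support
      · have h0 : ∑ j' ∈ (φ.split y).support, (φ ⟨y, j'⟩ x y) • (v ⟨y, j'⟩) = 0 := by
          have h0' := hz y
          simp only [hu] at h0'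
          exact h0' 
        have hli : LinearIndependent K (fun j' : Module.Basis.ofVectorSpaceIndex K (C y) =>
            (v ⟨y, j'⟩)) := by
          have := (B y).linearIndependent.map' (C y).subtype (Submodule.ker_subtype _)
          simpa only [hv, Function.comp_def, Submodule.coe_subtype] using this
        exact linearIndependent_iff'.1 hli (φ.split y).support _ h0 j hmem
      · have h0 : φ ⟨y, j⟩ = 0 := by
          rw [← Finsupp.split_apply]
          exact Finsupp.notMem_support_iff.1 hmem
        rw [h0, IncidenceAlgebra.zero_apply]
    apply Finsupp.ext
    intro t
    ext a b hab
    rw [Finsupp.coe_zero, Pi.zero_apply, IncidenceAlgebra.zero_apply]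
    by_cases hb : b = t.1
    · rw [hb]
      exact hcoef a t
    · rw [← hφ t, mul_sg_apply, if_neg (by tauto)]
  -- assemble
  have hmemN : ∀ q : Q, π q ∈ N := by
    intro q
    rw [← hrange]
    exact ⟨q, rfl⟩
  set πQ : Q →ₗ[IncidenceAlgebra K P] N :=
    LinearMap.codRestrict N (π.comp Q.subtype) (fun q => hmemN q) with hπQ
  have hbij : Function.Bijective πQ := by
    constructor
    · intro q1 q2 hq
      have hval : π (q1 : T →₀ IncidenceAlgebra K P) = π (q2 : T →₀ IncidenceAlgebra K P) := by
        have := congrArg Subtype.val hq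
        exact this
      have h0 : π ((q1 : T →₀ IncidenceAlgebra K P) - q2) = 0 := by
        rw [map_sub, hval, sub_self]
      have hz := hcore _ (Q.sub_mem q1.2 q2.2) h0
      exact Subtype.ext (sub_eq_zero.1 hz)
    · rintro ⟨n, hn⟩
      rw [← hrange] at hn
      obtain ⟨φ, hφeq⟩ := hn
      refine ⟨⟨ρ φ, hρQ φ⟩, ?_⟩
      apply Subtype.ext
      simp only [hπQ, LinearMap.codRestrict_apply, LinearMap.comp_apply,
        Submodule.coe_subtype]
      show π (ρ φ) = n
      rw [hπρ φ, hφeq]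
  haveI hQproj : Module.Projective (IncidenceAlgebra K P) Q := by
    apply Module.Projective.of_split Q.subtype (LinearMap.codRestrict Q ρ hρQ)
    apply LinearMap.ext
    intro q
    apply Subtype.ext
    simp only [LinearMap.comp_apply, LinearMap.codRestrict_apply, Submodule.coe_subtype,
      LinearMap.id_apply]
    exact hρid _ q.2
  exact Module.Projective.of_equiv (LinearEquiv.ofBijective πQ hbij)

end Main

end IncidenceHereditaryAux

/-!
STATEMENT 12.  The incidence algebra `A(P)` of a finite poset `(P, ≤)` over a field is
hereditary (every submodule of a projective module is projective) iff `P` is diamond-free.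
-/

theorem incidenceAlgebra_hereditary_iff_diamondFree
    (K : Type) [Field K] (P : Type) [PartialOrder P] [Fintype P]
    [LocallyFiniteOrder P] [DecidableEq P] :
    (∀ (M : Type) [AddCommGroup M] [Module (IncidenceAlgebra K P) M],
        Module.Projective (IncidenceAlgebra K P) M →
        ∀ N : Submodule (IncidenceAlgebra K P) M,
          Module.Projective (IncidenceAlgebra K P) N) ↔
      ¬ ∃ a b c d : P, a ≤ b ∧ b ≤ d ∧ a ≤ c ∧ c ≤ d ∧ ¬ b ≤ c ∧ ¬ c ≤ b := by
  classical
  constructor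
  · intro hH
    rintro ⟨a, b, c, d, hab, hbd, hac, hcd, hbc, hcb⟩
    refine IncidenceHereditaryAux.diamond_not_projective (K := K) hab hbd hac hcd hbc hcb ?_
    exact hH (IncidenceAlgebra K P) inferInstance
      (Submodule.span (IncidenceAlgebra K P)
        {IncidenceHereditaryAux.sg K b d, IncidenceHereditaryAux.sg K c d})
  · intro hDF M _ _ hMproj N
    obtain ⟨s, hs⟩ := (Module.projective_def).1 hMproj
    have hsinj : Function.Injective s := hs.injective
    haveI hproj := IncidenceHereditaryAux.projective_of_diamondFree hDF M (N.map s)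
    exact Module.Projective.of_equiv (Submodule.equivMapOfInjective s hsinj N).symm
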